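/- Let 𝒢=(G,w) be a pruned positive-weighted graph with V(G)={1,...,n}, and write D_{i,j}=D_{i,j}(𝒢). Then G contains a subgraph that is a subdivision of K₅ if and only if there exists a 5-element subset Q of [n] such that for any distinct a,b ∈ Q, either D_{a,b} is indecomposable, or there exists a sequence (x₁,...,x_r) of vertices in [n]∖Q (depending on {a,b}) such that D_{a,x₁}, D_{x₁,x₂}, ..., D_{x_r,b} are all indecomposable, and such that for distinct pairs {a,b} ≠ {a',b'} in Q the corresponding sequences do not intersect. -/

import Mathlib

open SimpleGraph

variable {V : Type*}

/-- weight of a walk: sum of the weights of its edges -/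
noncomputable def walkWeight (G : SimpleGraph V) (w : Sym2 V → ℝ) {i j : V} (p : G.Walk i j) : ℝ :=
  (p.edges.map w).sum

/-- the 2-weight: min over paths joining i and j -/
noncomputable def wdist (G : SimpleGraph V) (w : Sym2 V → ℝ) (i j : V) : ℝ :=
  sInf {x : ℝ | ∃ p : G.Walk i j, p.IsPath ∧ walkWeight G w p = x}

def Realizes (G : SimpleGraph V) (w : Sym2 V → ℝ) {i j : V} (p : G.Walk i j) : Prop :=
  p.IsPath ∧ walkWeight G w p = wdist G w i j

def UsefulEdge (G : SimpleGraph V) (w : Sym2 V → ℝ) (e : Sym2 V) : Prop :=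
  ∃ a b : V, a ≠ b ∧ ∀ p : G.Walk a b, Realizes G w p → e ∈ p.edges

def Pruned (G : SimpleGraph V) (w : Sym2 V → ℝ) : Prop :=
  ∀ e ∈ G.edgeSet, UsefulEdge G w e

def PosWeights (G : SimpleGraph V) (w : Sym2 V → ℝ) : Prop :=
  ∀ e ∈ G.edgeSet, 0 < w e

def Indec (G : SimpleGraph V) (w : Sym2 V → ℝ) (i j : V) : Prop :=
  ∀ z : V, z ≠ i → z ≠ j → wdist G w i j < wdist G w i z + wdist G w z j

def IsLeaf (G : SimpleGraph V) (v : V) : Prop := (G.neighborSet v).ncard = 1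

def IsSnake (G : SimpleGraph V) : Prop :=
  G.IsTree ∧ {v : V | IsLeaf G v}.ncard = 2

def IsCaterpillar (G : SimpleGraph V) : Prop :=
  G.IsTree ∧ ∃ (x₁ x₂ : V) (p : G.Walk x₁ x₂), p.IsPath ∧
    {v : V | v ∈ p.support} = {v : V | 2 ≤ (G.neighborSet v).ncard}

def IsPolygon {n : ℕ} [NeZero n] (G : SimpleGraph (Fin n)) : Prop :=
  ∃ σ : Equiv.Perm (Fin n), G.edgeSet = Set.range (fun i : Fin n => s(σ i, σ (i + 1)))

noncomputable def tmin (G : SimpleGraph V) (w : Sym2 V → ℝ) (x : V) : ℝ :=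
  (1 / 2) * sInf {r : ℝ | ∃ y z : V, y ≠ x ∧ z ≠ x ∧ y ≠ z ∧
    r = wdist G w x y + wdist G w x z - wdist G w y z}

def IsBipartiteOn (G : SimpleGraph V) (X Y : Set V) : Prop :=
  X ∩ Y = ∅ ∧ X ∪ Y = Set.univ ∧ ∀ a b : V, G.Adj a b → (a ∈ X ∧ b ∈ Y) ∨ (a ∈ Y ∧ b ∈ X)

noncomputable def chainSum {α : Type*} (D : α → α → ℝ) : List α → ℝ
  | [] => 0
  | [_] => 0
  | a :: b :: l => D a b + chainSum D (b :: l)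

def FIndec {n : ℕ} (D : Fin n → Fin n → ℝ) (i j : Fin n) : Prop :=
  ∀ z : Fin n, z ≠ i → z ≠ j → D i j < D i z + D z j

def TriangleIneq {n : ℕ} (D : Fin n → Fin n → ℝ) : Prop :=
  ∀ i j k : Fin n, i ≠ j → j ≠ k → i ≠ k → D i j ≤ D i k + D k j

def MaxTwice (x y z : ℝ) : Prop :=
  (x = y ∧ z ≤ x) ∨ (x = z ∧ y ≤ x) ∨ (y = z ∧ x ≤ y)

def FourPoint {n : ℕ} (D : Fin n → Fin n → ℝ) : Prop :=
  ∀ i j k h : Fin n, i ≠ j → i ≠ k → i ≠ h → j ≠ k → j ≠ h → k ≠ h →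
    MaxTwice (D i j + D k h) (D i k + D j h) (D i h + D k j)

def MedianFamily {n : ℕ} (D : Fin n → Fin n → ℝ) : Prop :=
  ∀ a b c : Fin n, ∃! m : Fin n,
    ∀ i ∈ ({a, b, c} : Set (Fin n)), ∀ j ∈ ({a, b, c} : Set (Fin n)), i ≠ j →
      D i j = D i m + D j m

noncomputable def tminF {n : ℕ} (D : Fin n → Fin n → ℝ) (x : Fin n) : ℝ :=
  (1 / 2) * sInf {r : ℝ | ∃ y z : Fin n, y ≠ x ∧ z ≠ x ∧ y ≠ z ∧ r = D x y + D x z - D y z}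

def interiorSet {G : SimpleGraph V} {u v : V} (p : G.Walk u v) : Set V :=
  {x : V | x ∈ p.support ∧ x ≠ u ∧ x ≠ v}

/-- `G` contains a subgraph that is a subdivision of `K₅`: there are 5 branch vertices and a
system of pairwise internally disjoint paths joining them, whose interior vertices avoid the
branch vertices. -/
def ContainsSubdivisionK5 (G : SimpleGraph V) : Prop :=
  ∃ f : Fin 5 → V, Function.Injective f ∧
    ∃ P : ∀ a b : Fin 5, G.Walk (f a) (f b),
      (∀ a b : Fin 5, a ≠ b → (P a b).IsPath) ∧
      (∀ a b : Fin 5, a ≠ b → ∀ x ∈ interiorSet (P a b), x ∉ Set.range f) ∧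
      (∀ a b a' b' : Fin 5, a ≠ b → a' ≠ b' → ({a, b} : Finset (Fin 5)) ≠ {a', b'} →
        ∀ x ∈ interiorSet (P a b), x ∉ (P a' b').support)

section Helpers

variable {n : ℕ} {G : SimpleGraph (Fin n)} {w : Sym2 (Fin n) → ℝ}

lemma walkWeight_cons {i j k : Fin n} (h : G.Adj i j) (p : G.Walk j k) :
    walkWeight G w (Walk.cons h p) = w s(i, j) + walkWeight G w p := by
  simp [walkWeight, Walk.edges_cons]

lemma walkWeight_append {i j k : Fin n} (p : G.Walk i j) (q : G.Walk j k) :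
    walkWeight G w (p.append q) = walkWeight G w p + walkWeight G w q := by
  simp [walkWeight, Walk.edges_append]

lemma walkWeight_reverse {i j : Fin n} (p : G.Walk i j) :
    walkWeight G w p.reverse = walkWeight G w p := by
  simp [walkWeight, Walk.edges_reverse, List.map_reverse, List.sum_reverse]

lemma walkWeight_nonneg (hw : PosWeights G w) {i j : Fin n} (p : G.Walk i j) :
    0 ≤ walkWeight G w p := by
  refine List.sum_nonneg ?_
  rintro x hx
  obtain ⟨e, he, rfl⟩ := List.mem_map.mp hx
  exact (hw e (p.edges_subset_edgeSet he)).le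

lemma walkWeight_pos (hw : PosWeights G w) {i j : Fin n} (hij : i ≠ j) (p : G.Walk i j) :
    0 < walkWeight G w p := by
  cases p with
  | nil => exact absurd rfl hij
  | cons h q =>
    rw [walkWeight_cons]
    exact add_pos_of_pos_of_nonneg (hw _ (G.mem_edgeSet.mpr h)) (walkWeight_nonneg hw q)

lemma wdist_set_eq (i j : Fin n) :
    {x : ℝ | ∃ p : G.Walk i j, p.IsPath ∧ walkWeight G w p = x} =
      Set.range (fun q : G.Path i j => walkWeight G w (q : G.Walk i j)) := by
  ext x
  constructor
  · rintro ⟨p, hp, rfl⟩; exact ⟨⟨p, hp⟩, rfl⟩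
  · rintro ⟨⟨p, hp⟩, rfl⟩; exact ⟨p, hp, rfl⟩

lemma wdist_set_finite (i j : Fin n) :
    ({x : ℝ | ∃ p : G.Walk i j, p.IsPath ∧ walkWeight G w p = x}).Finite := by
  classical
  rw [wdist_set_eq]
  exact Set.finite_range _

lemma exists_realizes (hconn : G.Connected) (i j : Fin n) :
    ∃ p : G.Walk i j, Realizes G w p := by
  have hne : ({x : ℝ | ∃ p : G.Walk i j, p.IsPath ∧ walkWeight G w p = x}).Nonempty := by
    obtain ⟨p⟩ := hconn.preconnected i j
    exact ⟨walkWeight G w (p.toPath : G.Walk i j), (p.toPath : G.Walk i j), p.toPath.property, rfl⟩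
  obtain ⟨p, hp, hpw⟩ := hne.csInf_mem (wdist_set_finite i j)
  exact ⟨p, hp, hpw⟩

lemma wdist_le_path {i j : Fin n} {p : G.Walk i j} (hp : p.IsPath) :
    wdist G w i j ≤ walkWeight G w p :=
  csInf_le (wdist_set_finite i j).bddBelow ⟨p, hp, rfl⟩

lemma sum_map_le_of_nodup_subset {l₁ l₂ : List (Sym2 (Fin n))} (h1 : l₁.Nodup)
    (hsub : l₁ ⊆ l₂) (hpos : ∀ e ∈ l₂, 0 ≤ w e) :
    (l₁.map w).sum ≤ (l₂.map w).sum := by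
  obtain ⟨l, hperm, hsl⟩ := h1.subperm hsub
  calc (l₁.map w).sum = (l.map w).sum := ((hperm.map w).sum_eq).symm
    _ ≤ (l₂.map w).sum := by
        refine (hsl.map w).sum_le_sum ?_
        rintro x hx
        obtain ⟨e, he, rfl⟩ := List.mem_map.mp hx
        exact hpos e he

lemma wdist_le_walk (hw : PosWeights G w) {i j : Fin n} (p : G.Walk i j) :
    wdist G w i j ≤ walkWeight G w p := by
  refine (wdist_le_path p.bypass_isPath).trans ?_
  refine sum_map_le_of_nodup_subset p.bypass_isPath.isTrail.edges_nodup
    p.edges_bypass_subset ?_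
  exact fun e he => (hw e (p.edges_subset_edgeSet he)).le

lemma wdist_self (i : Fin n) : wdist G w i i = 0 := by
  have hset : {x : ℝ | ∃ p : G.Walk i i, p.IsPath ∧ walkWeight G w p = x} = {0} := by
    ext x
    constructor
    · rintro ⟨p, hp, rfl⟩
      have h : (⟨p, hp⟩ : G.Path i i) = Path.nil := Path.loop_eq _
      have hp' : p = Walk.nil := congrArg Subtype.val h
      simp [hp', walkWeight]
    · rintro rfl
      exact ⟨Walk.nil, by simp, by simp [walkWeight]⟩
  rw [wdist, hset, csInf_singleton]

lemma wdist_pos (hconn : G.Connected) (hw : PosWeights G w) {i j : Fin n} (hij : i ≠ j) :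
    0 < wdist G w i j := by
  obtain ⟨p, _, hpw⟩ := exists_realizes (w := w) hconn i j
  exact hpw ▸ walkWeight_pos hw hij p

lemma indec_adj (hconn : G.Connected) (hw : PosWeights G w) {a b : Fin n}
    (hab : a ≠ b) (h : Indec G w a b) : G.Adj a b := by
  obtain ⟨p, hp, hpw⟩ := exists_realizes (w := w) hconn a b
  cases p with
  | nil => exact absurd rfl hab
  | @cons _ c _ hadj q =>
    by_cases hcb : c = b
    · exact hcb ▸ hadj
    · exfalso
      rw [Walk.cons_isPath_iff] at hp
      have h1 : wdist G w a c ≤ w s(a, c) := by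
        have hpath : (Walk.cons hadj (Walk.nil : G.Walk c c)).IsPath := by
          rw [Walk.cons_isPath_iff]
          exact ⟨Walk.IsPath.nil, by simp [hadj.ne]⟩
        have := wdist_le_path (w := w) hpath
        simpa [walkWeight_cons, walkWeight] using this
      have h2 : wdist G w c b ≤ walkWeight G w q := wdist_le_path hp.1
      have h3 := h c hadj.ne' hcb
      rw [← hpw, walkWeight_cons] at h3
      linarith

lemma exists_split {x y : Fin n} (p : G.Walk x y) {e : Sym2 (Fin n)} (he : e ∈ p.edges) :
    ∃ (u v : Fin n) (h : G.Adj u v) (q : G.Walk x u) (r : G.Walk v y),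
      s(u, v) = e ∧ p.edges = q.edges ++ s(u, v) :: r.edges := by
  induction p with
  | nil => simp at he
  | @cons _ c _ h q ih =>
    rw [Walk.edges_cons, List.mem_cons] at he
    rcases he with he | he
    · exact ⟨_, _, h, Walk.nil, q, he.symm, by simp⟩
    · obtain ⟨u, v, h', q', r', hse, hed⟩ := ih he
      exact ⟨u, v, h', Walk.cons h q', r', hse, by simp [hed]⟩

lemma adj_indec (hconn : G.Connected) (hw : PosWeights G w) (hpruned : Pruned G w)
    {a b : Fin n} (hadj : G.Adj a b) : Indec G w a b := by
  intro z hza hzb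
  by_contra hlt
  push_neg at hlt
  have hab : a ≠ b := hadj.ne
  set e := s(a, b) with he_def
  have hsingle : (Walk.cons hadj (Walk.nil : G.Walk b b)).IsPath := by
    rw [Walk.cons_isPath_iff]
    exact ⟨Walk.IsPath.nil, by simp [hab]⟩
  have hwe : wdist G w a b ≤ w e := by
    have := wdist_le_path (w := w) hsingle
    simpa [walkWeight_cons, walkWeight] using this
  obtain ⟨p1, hp1, hw1⟩ := exists_realizes (w := w) hconn a z
  obtain ⟨p2, hp2, hw2⟩ := exists_realizes (w := w) hconn z b
  have hsum : walkWeight G w p1 + walkWeight G w p2 ≤ w e := by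
    rw [hw1, hw2]; exact hlt.trans hwe
  have hpos1 : 0 < walkWeight G w p1 := walkWeight_pos hw (fun h => hza h.symm) p1
  have hpos2 : 0 < walkWeight G w p2 := walkWeight_pos hw hzb p2
  have hwnn : ∀ {i j : Fin n} (q : G.Walk i j), e ∈ q.edges → w e ≤ walkWeight G w q := by
    intro i j q hmem
    refine List.single_le_sum ?_ _ (List.mem_map_of_mem (f := w) hmem)
    rintro x hx
    obtain ⟨f, hf, rfl⟩ := List.mem_map.mp hx
    exact (hw f (q.edges_subset_edgeSet hf)).le
  have he1 : e ∉ p1.edges := fun hmem => by have := hwnn p1 hmem; linarith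
  have he2 : e ∉ p2.edges := fun hmem => by have := hwnn p2 hmem; linarith
  obtain ⟨x, y, hxy, hforce⟩ := hpruned e (G.mem_edgeSet.mpr hadj)
  obtain ⟨p, hp, hpw⟩ := exists_realizes (w := w) hconn x y
  have hep : e ∈ p.edges := hforce p ⟨hp, hpw⟩
  obtain ⟨u, v, huv, q, r, hse, hed⟩ := exists_split p hep
  have horient : (u = a ∧ v = b) ∨ (u = b ∧ v = a) := by
    rw [he_def, Sym2.eq_iff] at hse
    tauto
  obtain ⟨m, hme, hmw⟩ : ∃ m : G.Walk u v, e ∉ m.edges ∧ walkWeight G w m ≤ w e := by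
    rcases horient with ⟨rfl, rfl⟩ | ⟨rfl, rfl⟩
    · refine ⟨p1.append p2, ?_, by rw [walkWeight_append]; exact hsum⟩
      rw [Walk.edges_append, List.mem_append]
      tauto
    · refine ⟨(p1.append p2).reverse, ?_, by rw [walkWeight_reverse, walkWeight_append]; exact hsum⟩
      rw [Walk.edges_reverse, List.mem_reverse, Walk.edges_append, List.mem_append]
      tauto
  set W := q.append (m.append r) with hW_def
  have hqr : e ∉ q.edges ∧ e ∉ r.edges := by
    have hnd : p.edges.Nodup := hp.isTrail.edges_nodup
    rw [hed, hse] at hnd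
    rw [List.nodup_append] at hnd
    obtain ⟨-, hnd2, hdisj⟩ := hnd
    rw [List.nodup_cons] at hnd2
    exact ⟨fun hh => hdisj _ hh _ List.mem_cons_self rfl, hnd2.1⟩
  have hWe : e ∉ W.edges := by
    rw [hW_def, Walk.edges_append, Walk.edges_append]
    simp only [List.mem_append]
    tauto
  have hWw : walkWeight G w W ≤ walkWeight G w p := by
    have hpw' : walkWeight G w p = walkWeight G w q + (w e + walkWeight G w r) := by
      rw [walkWeight, hed, hse, List.map_append, List.sum_append, List.map_cons, List.sum_cons]
      rfl
    rw [hW_def, walkWeight_append, walkWeight_append, hpw']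
    linarith
  have hbp := W.bypass_isPath
  have hbe : e ∉ W.bypass.edges := fun h => hWe (W.edges_bypass_subset h)
  have hbw : walkWeight G w W.bypass ≤ walkWeight G w W := by
    refine sum_map_le_of_nodup_subset hbp.isTrail.edges_nodup W.edges_bypass_subset ?_
    exact fun f hf => (hw f (W.edges_subset_edgeSet hf)).le
  have hfin : walkWeight G w W.bypass = wdist G w x y :=
    le_antisymm (by rw [← hpw]; exact hbw.trans hWw) (wdist_le_path hbp)
  exact hbe (hforce W.bypass ⟨hbp, hfin⟩)

end Helpers

section Helpers2
variable {n : ℕ} {G : SimpleGraph (Fin n)} {w : Sym2 (Fin n) → ℝ}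

-- chain to walk
lemma chain_to_walk (R : Fin n → Fin n → Prop)
    (hR : ∀ a b : Fin n, a ≠ b → R a b → G.Adj a b) :
    ∀ (l : List (Fin n)) (x y : Fin n), List.Chain' R (x :: l ++ [y]) →
    ∃ p : G.Walk x y, ∀ v ∈ p.support, v = x ∨ v ∈ l ∨ v = y := by
  intro l
  induction l with
  | nil =>
    intro x y hc
    by_cases hxy : x = y
    · subst hxy; exact ⟨Walk.nil, by simp⟩
    · have hi : R x y := List.isChain_pair.mp hc
      refine ⟨Walk.cons (hR x y hxy hi) Walk.nil, ?_⟩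
      intro v hv
      simp only [Walk.support_cons, Walk.support_nil, List.mem_cons, List.mem_singleton] at hv
      tauto
  | cons z l ih =>
    intro x y hc
    simp only [List.cons_append] at hc
    replace hc := List.isChain_cons_cons.mp hc
    obtain ⟨p, hp⟩ := ih z y hc.2
    by_cases hxz : x = z
    · subst hxz
      refine ⟨p, fun v hv => ?_⟩
      rcases hp v hv with h | h | h
      · exact Or.inl h
      · exact Or.inr (Or.inl (List.mem_cons_of_mem _ h))
      · exact Or.inr (Or.inr h)
    · refine ⟨Walk.cons (hR x z hxz hc.1) p, fun v hv => ?_⟩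
      rw [Walk.support_cons, List.mem_cons] at hv
      rcases hv with rfl | hv
      · exact Or.inl rfl
      · rcases hp v hv with h | h | h
        · exact Or.inr (Or.inl (h ▸ List.mem_cons_self))
        · exact Or.inr (Or.inl (List.mem_cons_of_mem _ h))
        · exact Or.inr (Or.inr h)

lemma support_dropLast {c y : Fin n} (q : G.Walk c y) :
    q.support.dropLast ++ [y] = q.support := by
  induction q with
  | nil => simp
  | @cons a b d h q ih =>
    rw [Walk.support_cons, List.dropLast_cons_of_ne_nil (q.support_ne_nil), List.cons_append, ih]

-- support structure of a path with distinct endpoints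
lemma support_structure {x y : Fin n} (p : G.Walk x y) (hxy : x ≠ y) :
    p.support = x :: (p.support.tail.dropLast ++ [y]) := by
  cases p with
  | nil => exact absurd rfl hxy
  | cons h q =>
    rw [Walk.support_cons, List.tail_cons, support_dropLast]

lemma finset_pair_eq {α β : Type*} [DecidableEq α] [DecidableEq β] {f : α → β}
    (hf : Function.Injective f) {a b a' b' : α}
    (h : ({f a, f b} : Finset β) = {f a', f b'}) : ({a, b} : Finset α) = {a', b'} := by
  have h2 : ({f a, f b} : Set β) = {f a', f b'} := by
    have := congrArg (fun s : Finset β => (s : Set β)) h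
    simpa using this
  rw [Set.pair_eq_pair_iff] at h2
  rcases h2 with ⟨h1, h2⟩ | ⟨h1, h2⟩
  · rw [hf h1, hf h2]
  · rw [hf h1, hf h2, Finset.pair_comm]

end Helpers2

/-- A pruned positive-weighted graph contains a subdivision of `K₅` iff there is a 5-element
set `Q` of vertices such that each pair of `Q` is joined by a (possibly empty) sequence of
vertices outside `Q` with all consecutive 2-weights indecomposable, the sequences attached to
distinct pairs being disjoint. -/
theorem stmt_15 {n : ℕ} (G : SimpleGraph (Fin n)) (hconn : G.Connected)
    (w : Sym2 (Fin n) → ℝ) (hw : PosWeights G w) (hpruned : Pruned G w) :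
    ContainsSubdivisionK5 G ↔
      ∃ Q : Finset (Fin n), Q.card = 5 ∧ ∃ c : Fin n → Fin n → List (Fin n),
        (∀ a ∈ Q, ∀ b ∈ Q, a ≠ b →
          ((Indec G w a b ∧ c a b = []) ∨
            (c a b ≠ [] ∧ (∀ v ∈ c a b, v ∉ Q) ∧
              List.Chain' (Indec G w) (a :: (c a b ++ [b]))))) ∧
        (∀ a ∈ Q, ∀ b ∈ Q, ∀ a' ∈ Q, ∀ b' ∈ Q, a ≠ b → a' ≠ b' →
          ({a, b} : Finset (Fin n)) ≠ {a', b'} → ∀ v ∈ c a b, v ∉ c a' b') := by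
  classical
  constructor
  · rintro ⟨f, hf, P, hpath, hint, hdisj⟩
    set Q : Finset (Fin n) := Finset.univ.image f with hQ_def
    have hmemQ : ∀ v, v ∈ Q ↔ ∃ a : Fin 5, f a = v := by simp [hQ_def]
    set c : Fin n → Fin n → List (Fin n) := fun x y =>
      if h : ∃ a b : Fin 5, a ≠ b ∧ f a = x ∧ f b = y then
        ((P h.choose h.choose_spec.choose).support.tail.dropLast)
      else [] with hc_def
    have key : ∀ x ∈ Q, ∀ y ∈ Q, x ≠ y → ∃ a b : Fin 5, a ≠ b ∧ f a = x ∧ f b = y ∧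
        (x :: (c x y ++ [y])) = (P a b).support ∧
        (∀ v ∈ c x y, v ∈ interiorSet (P a b)) := by
      intro x hx y hy hxy
      obtain ⟨a', ha'⟩ := (hmemQ x).mp hx
      obtain ⟨b', hb'⟩ := (hmemQ y).mp hy
      have hex : ∃ a b : Fin 5, a ≠ b ∧ f a = x ∧ f b = y :=
        ⟨a', b', fun h => hxy (by rw [← ha', ← hb', h]), ha', hb'⟩
      obtain ⟨hab0, hfa0, hfb0⟩ := hex.choose_spec.choose_spec
      set a0 := hex.choose
      set b0 := hex.choose_spec.choose
      have hceq : c x y = (P a0 b0).support.tail.dropLast := by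
        simp only [hc_def]
        rw [dif_pos hex]
      have hne : f a0 ≠ f b0 := by rw [hfa0, hfb0]; exact hxy
      have hsupp : (x :: (c x y ++ [y])) = (P a0 b0).support := by
        rw [support_structure (P a0 b0) hne, hceq, ← hfa0, ← hfb0]
      refine ⟨a0, b0, hab0, hfa0, hfb0, hsupp, ?_⟩
      intro v hv
      have hnd : ((x :: (c x y ++ [y]))).Nodup := by
        rw [hsupp]; exact (hpath a0 b0 hab0).support_nodup
      rw [List.nodup_cons] at hnd
      have hvs : v ∈ (P a0 b0).support := by
        rw [← hsupp]
        exact List.mem_cons_of_mem _ (List.mem_append_left _ hv)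
      refine ⟨hvs, ?_, ?_⟩
      · rw [hfa0]
        rintro rfl
        exact hnd.1 (List.mem_append_left _ hv)
      · rw [hfb0]
        rintro rfl
        rw [List.nodup_append] at hnd
        exact hnd.2.2.2 _ hv _ (List.mem_singleton_self _) rfl
    refine ⟨Q, ?_, c, ?_, ?_⟩
    · rw [hQ_def, Finset.card_image_of_injective _ hf, Finset.card_univ, Fintype.card_fin]
    · -- condition 1
      intro x hx y hy hxy
      obtain ⟨a0, b0, hab0, hfa0, hfb0, hsupp, hintm⟩ := key x hx y hy hxy
      have hchain : List.Chain' (Indec G w) (x :: (c x y ++ [y])) := by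
        rw [hsupp]
        exact ((P a0 b0).isChain_adj_support).imp
          (fun _ _ hadj => adj_indec hconn hw hpruned hadj)
      by_cases hnil : c x y = []
      · left
        refine ⟨?_, hnil⟩
        rw [hnil] at hchain
        exact List.isChain_pair.mp hchain
      · right
        refine ⟨hnil, ?_, hchain⟩
        intro v hv hvQ
        obtain ⟨i, rfl⟩ := (hmemQ v).mp hvQ
        exact hint a0 b0 hab0 _ (hintm _ hv) ⟨i, rfl⟩
    · -- condition 2
      intro x hx y hy x' hx' y' hy' hxy hxy' hpairs v hv hv'
      obtain ⟨a0, b0, hab0, hfa0, hfb0, hsupp, hintm⟩ := key x hx y hy hxy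
      obtain ⟨a1, b1, hab1, hfa1, hfb1, hsupp', hintm'⟩ := key x' hx' y' hy' hxy'
      have hpair5 : ({a0, b0} : Finset (Fin 5)) ≠ {a1, b1} := by
        intro heq
        apply hpairs
        have himg := congrArg (Finset.image f) heq
        rw [Finset.image_insert, Finset.image_singleton,
          Finset.image_insert, Finset.image_singleton, hfa0, hfb0, hfa1, hfb1] at himg
        exact himg
      have hnotsupp := hdisj a0 b0 a1 b1 hab0 hab1 hpair5 v (hintm v hv)
      apply hnotsupp
      rw [← hsupp']
      exact List.mem_cons_of_mem _ (List.mem_append_left _ hv')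
  · rintro ⟨Q, hQ5, c, hc1, hc2⟩
    set f : Fin 5 → Fin n := fun i => (Q.orderIsoOfFin hQ5 i : Fin n) with hf_def
    have hfinj : Function.Injective f := fun i j h =>
      (Q.orderIsoOfFin hQ5).injective (Subtype.ext h)
    have hfQ : ∀ i, f i ∈ Q := fun i => (Q.orderIsoOfFin hQ5 i).2
    have hfne : ∀ {a b : Fin 5}, a ≠ b → f a ≠ f b := fun hab h => hab (hfinj h)
    have hchain : ∀ a b : Fin 5, a ≠ b →
        List.Chain' (Indec G w) (f a :: (c (f a) (f b) ++ [f b])) := by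
      intro a b hab
      rcases hc1 (f a) (hfQ a) (f b) (hfQ b) (hfne hab) with ⟨hi, hnil⟩ | ⟨-, -, hch⟩
      · rw [hnil]; exact List.isChain_pair.mpr hi
      · exact hch
    have hPex : ∀ a b : Fin 5, ∃ p : G.Walk (f a) (f b),
        a ≠ b → p.IsPath ∧ ∀ v ∈ p.support, v = f a ∨ v ∈ c (f a) (f b) ∨ v = f b := by
      intro a b
      by_cases hab : a = b
      · exact ⟨(Walk.nil : G.Walk (f a) (f a)).copy rfl (congrArg f hab),
          fun h => absurd hab h⟩
      · obtain ⟨p, hp⟩ := chain_to_walk (Indec G w)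
          (fun u v huv hi => indec_adj hconn hw huv hi)
          (c (f a) (f b)) (f a) (f b) (hchain a b hab)
        exact ⟨p.bypass, fun _ =>
          ⟨p.bypass_isPath, fun v hv => hp v (p.support_bypass_subset hv)⟩⟩
    choose P hP using hPex
    have hmemc : ∀ a b : Fin 5, a ≠ b → ∀ v ∈ interiorSet (P a b),
        v ∈ c (f a) (f b) ∧ v ∉ Q := by
      intro a b hab v hv
      obtain ⟨hvs, hvx, hvy⟩ := hv
      have hvc : v ∈ c (f a) (f b) := by
        rcases (hP a b hab).2 v hvs with h | h | h
        · exact absurd h hvx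
        · exact h
        · exact absurd h hvy
      refine ⟨hvc, ?_⟩
      rcases hc1 (f a) (hfQ a) (f b) (hfQ b) (hfne hab) with ⟨-, hnil⟩ | ⟨-, hav, -⟩
      · rw [hnil] at hvc; simp at hvc
      · exact hav v hvc
    refine ⟨f, hfinj, P, fun a b hab => (hP a b hab).1, ?_, ?_⟩
    · intro a b hab v hv
      obtain ⟨-, hvQ⟩ := hmemc a b hab v hv
      rintro ⟨i, rfl⟩
      exact hvQ (hfQ i)
    · intro a b a' b' hab ha'b' hpairs v hv hv'
      obtain ⟨hvc, hvQ⟩ := hmemc a b hab v hv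
      rcases (hP a' b' ha'b').2 v hv' with h | h | h
      · exact hvQ (h ▸ hfQ a')
      · have hne : ({f a, f b} : Finset (Fin n)) ≠ {f a', f b'} :=
          fun heq => hpairs (finset_pair_eq hfinj heq)
        exact hc2 (f a) (hfQ a) (f b) (hfQ b) (f a') (hfQ a') (f b') (hfQ b')
          (hfne hab) (hfne ha'b') hne v hvc h
      · exact hvQ (h ▸ hfQ b')
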